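/- In the greedy indexing algorithm for undirected graphs (Algorithm: at step s, rank unindexed nodes by lexicographic order of their sets of already-indexed neighbors, assign temporary indexes, and give index s to a node whose temporary full neighbor set has minimal lexicographic order), for any two nodes u, v with final indexes I(u) < I(v) and any step s, the temporary indexes satisfy I^s(u) ≤ I^s(v). -/

import Mathlib

open scoped Classical

/-- The sorted sequence of a finite set of naturals, padded with the sentinel `n`. -/
def seqOf (n : ℕ) (S : Finset ℕ) (i : ℕ) : ℕ := (S.sort (· ≤ ·)).getD i n

/-- Strict lexicographic order on finite sets of naturals, compared via their sorted
sequences padded with sentinel `n`. -/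
def LOlt (n : ℕ) (S T : Finset ℕ) : Prop :=
  ∃ l : ℕ, (∀ i < l, seqOf n S i = seqOf n T i) ∧ seqOf n S l < seqOf n T l

/-- Non-strict lexicographic order. -/
def LOle (n : ℕ) (S T : Finset ℕ) : Prop := S = T ∨ LOlt n S T

/-- `N^s(v)`: labels of already-indexed neighbors of `v` at step `s`. -/
noncomputable def Nidx {V : Type*} [Fintype V] {n : ℕ} (G : SimpleGraph V) (I : V ≃ Fin n)
    (s : ℕ) (v : V) : Finset ℕ :=
  ((G.neighborFinset v).filter (fun u => (I u : ℕ) < s)).image (fun u => (I u : ℕ))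

/-- `rank^s(v)`: the number of unindexed nodes whose indexed-neighbor set is
lexicographically smaller than that of `v`. -/
noncomputable def rankOf {V : Type*} [Fintype V] {n : ℕ} (G : SimpleGraph V) (I : V ≃ Fin n)
    (s : ℕ) (v : V) : ℕ :=
  (Finset.univ.filter
    (fun u : V => s ≤ (I u : ℕ) ∧ LOlt n (Nidx G I s u) (Nidx G I s v))).card

/-- `I^s(v)`: temporary index at step `s`. -/
noncomputable def Itmp {V : Type*} [Fintype V] {n : ℕ} (G : SimpleGraph V) (I : V ≃ Fin n)
    (s : ℕ) (v : V) : ℕ :=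
  if (I v : ℕ) < s then (I v : ℕ) else rankOf G I s v + s

/-- `N^s_t(v)`: temporary neighbor set at step `s`. -/
noncomputable def Ntmp {V : Type*} [Fintype V] {n : ℕ} (G : SimpleGraph V) (I : V ≃ Fin n)
    (s : ℕ) (v : V) : Finset ℕ :=
  (G.neighborFinset v).image (Itmp G I s)


section Aux

lemma seqOf_mem {n : ℕ} {S : Finset ℕ} {i : ℕ} (h : i < S.card) : seqOf n S i ∈ S := by
  unfold seqOf
  rw [List.getD_eq_getElem _ _ (by rwa [Finset.length_sort])]
  exact (Finset.mem_sort _).1 (List.getElem_mem _)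

lemma seqOf_pad {n : ℕ} {S : Finset ℕ} {i : ℕ} (h : S.card ≤ i) : seqOf n S i = n :=
  List.getD_eq_default _ _ (by rwa [Finset.length_sort])

lemma seqOf_le {n : ℕ} {S : Finset ℕ} (hS : ∀ a ∈ S, a ≤ n) (i : ℕ) : seqOf n S i ≤ n := by
  rcases lt_or_ge i S.card with h | h
  · exact hS _ (seqOf_mem h)
  · rw [seqOf_pad h]

lemma seqOf_mono {n : ℕ} {S : Finset ℕ} (hS : ∀ a ∈ S, a ≤ n) {i j : ℕ} (hij : i ≤ j) :
    seqOf n S i ≤ seqOf n S j := by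
  rcases lt_or_ge j S.card with h | h
  · rcases eq_or_lt_of_le hij with rfl | hij'
    · exact le_rfl
    · have hi : i < (S.sort (· ≤ ·)).length := by rw [Finset.length_sort]; omega
      have hj : j < (S.sort (· ≤ ·)).length := by rw [Finset.length_sort]; omega
      unfold seqOf
      rw [List.getD_eq_getElem _ _ hi, List.getD_eq_getElem _ _ hj]
      have := List.pairwise_iff_get.1 (Finset.pairwise_sort S (· ≤ ·)) ⟨i, hi⟩ ⟨j, hj⟩ hij'
      simpa using this
  · rw [seqOf_pad h]; exact seqOf_le hS i

lemma sort_union {S T : Finset ℕ} (h : ∀ a ∈ S, ∀ b ∈ T, a < b) :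
    (S ∪ T).sort (· ≤ ·) = S.sort (· ≤ ·) ++ T.sort (· ≤ ·) := by
  refine (fun h1 h2 h3 => List.Perm.eq_of_pairwise' (r := (· ≤ ·)) h2 h3 h1) ?_ ?_ ?_
  · apply List.perm_of_nodup_nodup_toFinset_eq (Finset.sort_nodup _ _)
    · rw [List.nodup_append]
      refine ⟨Finset.sort_nodup _ _, Finset.sort_nodup _ _, ?_⟩
      intro a ha b hb
      rw [Finset.mem_sort] at ha hb
      exact ne_of_lt (h a ha b hb)
    · rw [List.toFinset_append, Finset.sort_toFinset, Finset.sort_toFinset, Finset.sort_toFinset]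
  · exact Finset.pairwise_sort _ _
  · rw [List.pairwise_append]
    refine ⟨Finset.pairwise_sort _ _, Finset.pairwise_sort _ _, ?_⟩
    intro a ha b hb
    rw [Finset.mem_sort] at ha hb
    exact le_of_lt (h a ha b hb)

lemma seqOf_union_left {n : ℕ} {S T : Finset ℕ} (h : ∀ a ∈ S, ∀ b ∈ T, a < b) {i : ℕ}
    (hi : i < S.card) : seqOf n (S ∪ T) i = seqOf n S i := by
  unfold seqOf
  rw [sort_union h]
  exact List.getD_append _ _ _ _ (by rwa [Finset.length_sort])

lemma seqOf_union_right {n : ℕ} {S T : Finset ℕ} (h : ∀ a ∈ S, ∀ b ∈ T, a < b) {i : ℕ}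
    (hi : S.card ≤ i) : seqOf n (S ∪ T) i = seqOf n T (i - S.card) := by
  unfold seqOf
  rw [sort_union h, List.getD_append_right _ _ _ _ (by rwa [Finset.length_sort]),
    Finset.length_sort]

lemma LOlt_irrefl {n : ℕ} {S : Finset ℕ} (h : LOlt n S S) : False := by
  obtain ⟨l, _, h2⟩ := h; omega

lemma LOlt_asymm {n : ℕ} {S T : Finset ℕ} (h1 : LOlt n S T) (h2 : LOlt n T S) : False := by
  obtain ⟨l1, ha1, hb1⟩ := h1
  obtain ⟨l2, ha2, hb2⟩ := h2
  rcases lt_trichotomy l1 l2 with h | h | h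
  · have := ha2 l1 h; omega
  · subst h; omega
  · have := ha1 l2 h; omega

lemma LOlt_trans {n : ℕ} {A B C : Finset ℕ} (h1 : LOlt n A B) (h2 : LOlt n B C) : LOlt n A C := by
  obtain ⟨l1, ha1, hb1⟩ := h1
  obtain ⟨l2, ha2, hb2⟩ := h2
  rcases le_or_gt l1 l2 with h | h
  · refine ⟨l1, fun i hi => ?_, ?_⟩
    · rw [ha1 i hi, ha2 i (lt_of_lt_of_le hi h)]
    · rcases eq_or_lt_of_le h with rfl | h'
      · omega
      · have := ha2 l1 h'; omega
  · refine ⟨l2, fun i hi => ?_, ?_⟩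
    · rw [ha1 i (hi.trans h), ha2 i hi]
    · have := ha1 l2 h; omega

/-- adding larger elements to both sides preserves strict lex order -/
lemma LOlt_ext {n t : ℕ} (htn : t ≤ n) {S T P Q : Finset ℕ}
    (hS : ∀ a ∈ S, a < t) (hT : ∀ a ∈ T, a < t)
    (hP : ∀ b ∈ P, t ≤ b ∧ b < n) (hQ : ∀ b ∈ Q, t ≤ b ∧ b < n)
    (h : LOlt n S T) : LOlt n (S ∪ P) (T ∪ Q) := by
  have hSP : ∀ a ∈ S, ∀ b ∈ P, a < b := fun a ha b hb => lt_of_lt_of_le (hS a ha) (hP b hb).1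
  have hTQ : ∀ a ∈ T, ∀ b ∈ Q, a < b := fun a ha b hb => lt_of_lt_of_le (hT a ha) (hQ b hb).1
  have hSn : ∀ a ∈ S, a ≤ n := fun a ha => le_of_lt (lt_of_lt_of_le (hS a ha) htn)
  have hTn : ∀ a ∈ T, a ≤ n := fun a ha => le_of_lt (lt_of_lt_of_le (hT a ha) htn)
  obtain ⟨l, hagree, hlt⟩ := h
  have hTl : seqOf n T l ≤ n := seqOf_le hTn l
  have hSl : seqOf n S l < n := lt_of_lt_of_le hlt hTl
  have hlS : l < S.card := by by_contra hc; rw [seqOf_pad (not_lt.1 hc)] at hSl; omega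
  have hSlt : seqOf n S l < t := hS _ (seqOf_mem hlS)
  refine ⟨l, fun i hi => ?_, ?_⟩
  · have hmono := seqOf_mono hSn (le_of_lt hi) (i := i) (j := l)
    have hiS : i < S.card := by
      by_contra hc; rw [seqOf_pad (not_lt.1 hc)] at hmono; omega
    have heq := hagree i hi
    have hiT : i < T.card := by
      by_contra hc; rw [seqOf_pad (not_lt.1 hc)] at heq
      have h2 : seqOf n S i < t := hS _ (seqOf_mem hiS)
      omega
    rw [seqOf_union_left hSP hiS, seqOf_union_left hTQ hiT, heq]
  · rw [seqOf_union_left hSP hlS]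
    rcases lt_or_ge l T.card with hlT | hlT
    · rw [seqOf_union_left hTQ hlT]; exact hlt
    · have : t ≤ seqOf n (T ∪ Q) l := by
        rw [seqOf_union_right hTQ hlT]
        rcases lt_or_ge (l - T.card) Q.card with hq | hq
        · exact (hQ _ (seqOf_mem hq)).1
        · rw [seqOf_pad hq]; exact htn
      omega

/-- appending the next element makes the set lex-smaller -/
lemma LOlt_union_singleton {n t : ℕ} (htn : t < n) {S : Finset ℕ} (hS : ∀ a ∈ S, a < t) :
    LOlt n (S ∪ {t}) S := by
  have hst : ∀ a ∈ S, ∀ b ∈ ({t} : Finset ℕ), a < b := by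
    intro a ha b hb; rw [Finset.mem_singleton] at hb; subst hb; exact hS a ha
  refine ⟨S.card, fun i hi => seqOf_union_left hst hi, ?_⟩
  rw [seqOf_union_right hst le_rfl, seqOf_pad le_rfl, Nat.sub_self]
  show seqOf n {t} 0 < n
  unfold seqOf
  rw [Finset.sort_singleton]
  simpa using htn

variable {V : Type*} [Fintype V] {n : ℕ} (G : SimpleGraph V) (I : V ≃ Fin n)

lemma nidx_mem {t : ℕ} {x : V} {a : ℕ} (ha : a ∈ Nidx G I t x) : a < t ∧ a < n := by
  simp only [Nidx, Finset.mem_image, Finset.mem_filter] at ha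
  obtain ⟨u, ⟨_, hu⟩, rfl⟩ := ha
  exact ⟨hu, (I u).isLt⟩

/-- the new labels appearing at step `t+1`. -/
noncomputable def Pstep (t : ℕ) (x : V) : Finset ℕ :=
  ((G.neighborFinset x).filter (fun u => (I u : ℕ) = t)).image (fun u => (I u : ℕ))

lemma pstep_mem {t : ℕ} {x : V} {a : ℕ} (ha : a ∈ Pstep G I t x) : a = t := by
  simp only [Pstep, Finset.mem_image, Finset.mem_filter] at ha
  obtain ⟨u, ⟨_, hu⟩, rfl⟩ := ha
  exact hu

lemma nidx_succ (t : ℕ) (x : V) :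
    Nidx G I (t+1) x = Nidx G I t x ∪ Pstep G I t x := by
  ext a
  simp only [Nidx, Pstep, Finset.mem_union, Finset.mem_image, Finset.mem_filter]
  constructor
  · rintro ⟨u, ⟨hu, h⟩, rfl⟩
    rcases Nat.lt_succ_iff_lt_or_eq.1 h with h' | h'
    · exact Or.inl ⟨u, ⟨hu, h'⟩, rfl⟩
    · exact Or.inr ⟨u, ⟨hu, h'⟩, rfl⟩
  · rintro (⟨u, ⟨hu, h⟩, rfl⟩ | ⟨u, ⟨hu, h⟩, rfl⟩)
    · exact ⟨u, ⟨hu, by omega⟩, rfl⟩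
    · exact ⟨u, ⟨hu, by omega⟩, rfl⟩

lemma pstep_adj {t : ℕ} (ht : t < n) {x : V} (h : G.Adj x (I.symm ⟨t, ht⟩)) :
    Pstep G I t x = {t} := by
  ext a
  simp only [Pstep, Finset.mem_image, Finset.mem_filter, SimpleGraph.mem_neighborFinset,
    Finset.mem_singleton]
  constructor
  · rintro ⟨u, ⟨_, hu⟩, rfl⟩; exact hu
  · rintro rfl; exact ⟨I.symm ⟨a, ht⟩, ⟨h, by simp⟩, by simp⟩

lemma pstep_nadj {t : ℕ} (ht : t < n) {x : V} (h : ¬ G.Adj x (I.symm ⟨t, ht⟩)) :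
    Pstep G I t x = ∅ := by
  ext a
  simp only [Pstep, Finset.mem_image, Finset.mem_filter, SimpleGraph.mem_neighborFinset,
    Finset.notMem_empty, iff_false]
  rintro ⟨u, ⟨hadj, hu⟩, rfl⟩
  apply h
  have hue : u = I.symm ⟨t, ht⟩ := by
    apply I.injective
    simp [Fin.ext_iff, hu]
  rwa [← hue]

lemma nidx_stab {t : ℕ} (ht : n ≤ t) (x : V) : Nidx G I (t+1) x = Nidx G I t x := by
  unfold Nidx
  congr 1
  apply Finset.filter_congr
  intro u _
  have := (I u).isLt
  constructor <;> intro <;> omega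

lemma lolt_step {t : ℕ} {a b : V}
    (h : LOlt n (Nidx G I t a) (Nidx G I t b)) :
    LOlt n (Nidx G I (t+1) a) (Nidx G I (t+1) b) := by
  rcases lt_or_ge t n with ht | ht
  · rw [nidx_succ, nidx_succ]
    refine LOlt_ext (le_of_lt ht) (fun x hx => (nidx_mem G I hx).1)
      (fun x hx => (nidx_mem G I hx).1) ?_ ?_ h
    · intro bb hbb; have := pstep_mem G I hbb; omega
    · intro bb hbb; have := pstep_mem G I hbb; omega
  · rw [nidx_stab G I ht a, nidx_stab G I ht b]; exact h

lemma lolt_persist {t m : ℕ} (htm : t ≤ m) {a b : V}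
    (h : LOlt n (Nidx G I t a) (Nidx G I t b)) :
    LOlt n (Nidx G I m a) (Nidx G I m b) := by
  induction m, htm using Nat.le_induction with
  | base => exact h
  | succ m _ ih => exact lolt_step G I ih

lemma rank_add_lt {t : ℕ} (ht : t < n) {w : V} (hw : t ≤ (I w : ℕ)) :
    rankOf G I t w + t < n := by
  classical
  set F := Finset.univ.filter (fun u : V => t ≤ (I u : ℕ)) with hF
  have hsub : Finset.univ.filter
      (fun u : V => t ≤ (I u : ℕ) ∧ LOlt n (Nidx G I t u) (Nidx G I t w)) ⊆ F.erase w := by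
    intro u hu
    simp only [hF, Finset.mem_filter, Finset.mem_erase, Finset.mem_univ, true_and] at *
    refine ⟨?_, hu.1⟩
    rintro rfl; exact LOlt_irrefl hu.2
  have hwF : w ∈ F := by simp [hF, hw]
  have h1 : rankOf G I t w ≤ F.card - 1 := by
    have := Finset.card_le_card hsub
    rwa [Finset.card_erase_of_mem hwF] at this
  have h2 : F.card = ((Finset.univ : Finset (Fin n)).filter (fun j : Fin n => t ≤ (j : ℕ))).card := by
    apply Finset.card_bij (fun u _ => I u)
    · intro u hu
      simp only [hF, Finset.mem_filter, Finset.mem_univ, true_and] at *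
      exact hu
    · intro u _ u' _ h; exact I.injective h
    · intro j hj
      simp only [Finset.mem_filter, Finset.mem_univ, true_and] at hj
      exact ⟨I.symm j, by simp [hF, hj], by simp⟩
  have h3 : ((Finset.univ : Finset (Fin n)).filter (fun j : Fin n => t ≤ (j : ℕ))).card = n - t := by
    have himg : ((Finset.univ : Finset (Fin n)).filter (fun j : Fin n => t ≤ (j : ℕ))).image
        (fun j : Fin n => (j : ℕ)) = Finset.Ico t n := by
      ext j
      simp only [Finset.mem_image, Finset.mem_filter, Finset.mem_univ, true_and, Finset.mem_Ico]
      constructor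
      · rintro ⟨f, hf, rfl⟩; exact ⟨hf, f.isLt⟩
      · rintro ⟨hj1, hj2⟩; exact ⟨⟨j, hj2⟩, hj1, rfl⟩
    have hc := Finset.card_image_of_injective
      ((Finset.univ : Finset (Fin n)).filter (fun j : Fin n => t ≤ (j : ℕ))) Fin.val_injective
    rw [himg] at hc
    rw [← hc, Nat.card_Ico]
  omega

/-- labels of unindexed neighbors -/
noncomputable def Tstep (t : ℕ) (x : V) : Finset ℕ :=
  ((G.neighborFinset x).filter (fun u => ¬ (I u : ℕ) < t)).image (Itmp G I t)

lemma ntmp_eq (t : ℕ) (x : V) : Ntmp G I t x = Nidx G I t x ∪ Tstep G I t x := by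
  ext a
  simp only [Ntmp, Nidx, Tstep, Finset.mem_union, Finset.mem_image, Finset.mem_filter]
  constructor
  · rintro ⟨u, hu, rfl⟩
    by_cases h : (I u : ℕ) < t
    · exact Or.inl ⟨u, ⟨hu, h⟩, by simp [Itmp, h]⟩
    · exact Or.inr ⟨u, ⟨hu, h⟩, rfl⟩
  · rintro (⟨u, ⟨hu, h⟩, rfl⟩ | ⟨u, ⟨hu, h⟩, rfl⟩)
    · exact ⟨u, hu, by simp [Itmp, h]⟩
    · exact ⟨u, hu, rfl⟩

lemma tstep_mem {t : ℕ} (ht : t < n) {x : V} {b : ℕ} (hb : b ∈ Tstep G I t x) :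
    t ≤ b ∧ b < n := by
  simp only [Tstep, Finset.mem_image, Finset.mem_filter] at hb
  obtain ⟨u, ⟨_, hu⟩, rfl⟩ := hb
  rw [Itmp, if_neg hu]
  exact ⟨Nat.le_add_left _ _, rank_add_lt G I ht (not_lt.1 hu)⟩

lemma ntmp_lolt {t : ℕ} (ht : t < n) {a b : V} (h : LOlt n (Nidx G I t a) (Nidx G I t b)) :
    LOlt n (Ntmp G I t a) (Ntmp G I t b) := by
  rw [ntmp_eq, ntmp_eq]
  exact LOlt_ext (le_of_lt ht) (fun x hx => (nidx_mem G I hx).1)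
    (fun x hx => (nidx_mem G I hx).1) (fun x hx => tstep_mem G I ht hx)
    (fun x hx => tstep_mem G I ht hx) h

lemma key (halg : ∀ s : Fin n, ∀ u : V, (s : ℕ) ≤ (I u : ℕ) →
      LOle n (Ntmp G I (s : ℕ) (I.symm s)) (Ntmp G I (s : ℕ) u)) :
    ∀ s : ℕ, ∀ u v : V, s ≤ (I u : ℕ) → (I u : ℕ) < (I v : ℕ) →
      LOle n (Nidx G I s u) (Nidx G I s v) := by
  intro s
  induction s with
  | zero =>
    intro u v _ _
    left
    have h0 : ∀ x : V, Nidx G I 0 x = ∅ := by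
      intro x
      simp [Nidx, Finset.filter_false]
    rw [h0, h0]
  | succ s ih =>
    intro u v hu huv
    have hsu : s ≤ (I u : ℕ) := Nat.le_of_succ_le hu
    have hvn : (I v : ℕ) < n := (I v).isLt
    have hsn : s < n := by omega
    rcases ih u v hsu huv with heq | hlt
    · by_cases hau : G.Adj u (I.symm ⟨s, hsn⟩) <;> by_cases hav : G.Adj v (I.symm ⟨s, hsn⟩)
      · left
        rw [nidx_succ, nidx_succ, pstep_adj G I hsn hau, pstep_adj G I hsn hav, heq]
      · right
        rw [nidx_succ, nidx_succ, pstep_adj G I hsn hau, pstep_nadj G I hsn hav, heq,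
          Finset.union_empty]
        exact LOlt_union_singleton hsn (fun x hx => (nidx_mem G I hx).1)
      · exfalso
        have h1 : LOlt n (Nidx G I (s+1) v) (Nidx G I (s+1) u) := by
          rw [nidx_succ, nidx_succ, pstep_adj G I hsn hav, pstep_nadj G I hsn hau, ← heq,
            Finset.union_empty]
          exact LOlt_union_singleton hsn (fun x hx => (nidx_mem G I hx).1)
        have h2 := lolt_persist G I hu h1
        have h3 := ntmp_lolt G I (I u).isLt h2
        have h4 := halg (I u) v (le_of_lt huv)
        rw [Equiv.symm_apply_apply] at h4
        rcases h4 with he | hl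
        · rw [← he] at h3; exact LOlt_irrefl h3
        · exact LOlt_asymm hl h3
      · left
        rw [nidx_succ, nidx_succ, pstep_nadj G I hsn hau, pstep_nadj G I hsn hav, heq]
    · right
      exact lolt_step G I hlt


end Aux

/-- If the labeling `I` is produced by the greedy indexing algorithm for connected
undirected graphs (at each step `s` the node receiving index `s` has a temporary
neighbor set of minimal lexicographic order among unindexed nodes), then
`I(u) < I(v)` implies `I^s(u) ≤ I^s(v)` at every step `s`. -/
theorem stmt11 {V : Type*} [Fintype V] {n : ℕ} (G : SimpleGraph V) (hconn : G.Connected)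
    (I : V ≃ Fin n)
    (halg : ∀ s : Fin n, ∀ u : V, (s : ℕ) ≤ (I u : ℕ) →
      LOle n (Ntmp G I (s : ℕ) (I.symm s)) (Ntmp G I (s : ℕ) u)) :
    ∀ u v : V, I u < I v → ∀ s : ℕ, Itmp G I s u ≤ Itmp G I s v := by
  intro u v huv s
  have hval : (I u : ℕ) < (I v : ℕ) := huv
  by_cases hu : (I u : ℕ) < s <;> by_cases hv : (I v : ℕ) < s
  · simp only [Itmp, if_pos hu, if_pos hv]; omega
  · simp only [Itmp, if_pos hu, if_neg hv]; omega
  · omega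
  · simp only [Itmp, if_neg hu, if_neg hv]
    have hkey := key G I halg s u v (not_lt.1 hu) hval
    apply Nat.add_le_add_right
    unfold rankOf
    apply Finset.card_le_card
    intro w hw
    simp only [Finset.mem_filter, Finset.mem_univ, true_and] at *
    refine ⟨hw.1, ?_⟩
    rcases hkey with heq | hlt
    · rw [← heq]; exact hw.2
    · exact LOlt_trans hw.2 hlt
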